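/- Let B be a connected building set on S = {1, …, n+1}. Then the cones ℝ_{≥0}N = Σ_{I ∈ N} ℝ_{≥0} e_I, as N ranges over all nested sets of B, cover ℝ^n: for every x ∈ ℝ^n there exists a nested set N of B with x ∈ ℝ_{≥0}N. -/

import Mathlib

/-- A building set on a nonempty finite set `S`: a finite set of nonempty subsets of `S`
closed under unions of intersecting members, and containing all singletons. -/
def IsBuilding (S : Finset ℕ) (B : Finset (Finset ℕ)) : Prop :=
  (∀ I ∈ B, I ⊆ S ∧ I.Nonempty) ∧
  (∀ I ∈ B, ∀ J ∈ B, (I ∩ J).Nonempty → I ∪ J ∈ B) ∧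
  (∀ i ∈ S, ({i} : Finset ℕ) ∈ B)

/-- The set of maximal (by inclusion) elements of `B`. -/
def Bmax (B : Finset (Finset ℕ)) : Finset (Finset ℕ) :=
  B.filter (fun I => ∀ J ∈ B, I ⊆ J → I = J)

/-- The restriction `B|_C = {I ∈ B : I ⊆ C}`. -/
def restrict (B : Finset (Finset ℕ)) (C : Finset ℕ) : Finset (Finset ℕ) :=
  B.filter (fun I => I ⊆ C)

/-- `N` is a nested set of `B`: a subset of `B \ Bmax B` whose members are pairwise
nested or disjoint, such that no union of `k ≥ 2` pairwise disjoint members lies in `B`. -/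
def IsNested (B N : Finset (Finset ℕ)) : Prop :=
  N ⊆ B \ Bmax B ∧
  (∀ I ∈ N, ∀ J ∈ N, I ⊆ J ∨ J ⊆ I ∨ I ∩ J = ∅) ∧
  (∀ F ⊆ N, 2 ≤ F.card → (∀ I ∈ F, ∀ J ∈ F, I ≠ J → I ∩ J = ∅) → F.sup id ∉ B)

/-- `N` is a maximal (by inclusion) nested set of `B`. -/
def MaxNested (B N : Finset (Finset ℕ)) : Prop :=
  IsNested B N ∧ ∀ N' : Finset (Finset ℕ), IsNested B N' → N ⊆ N' → N = N'

/-- For `S = {1, …, n+1}`: `eVec n i` is the `i`-th standard basis vector of `ℝ^n`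
for `1 ≤ i ≤ n`, and `eVec n (n+1) = -e_1 - ⋯ - e_n`. -/
def eVec (n : ℕ) (i : ℕ) : Fin n → ℝ :=
  fun j => if i = (j : ℕ) + 1 then 1 else if i = n + 1 then -1 else 0

/-- `eSet n I = ∑ i ∈ I, e_i`. -/
def eSet (n : ℕ) (I : Finset ℕ) : Fin n → ℝ := ∑ i ∈ I, eVec n i

lemma eVec_sum_apply (n : ℕ) (y : ℕ → ℝ) (j : Fin n) :
    (∑ i ∈ Finset.Icc 1 (n+1), y i • eVec n i) j = y ((j:ℕ)+1) - y (n+1) := by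
  have hjn : (j:ℕ) < n := j.isLt
  have hne : (j:ℕ)+1 ≠ n+1 := by omega
  have hsub : ({(j:ℕ)+1, n+1} : Finset ℕ) ⊆ Finset.Icc 1 (n+1) := by
    intro i hi
    simp only [Finset.mem_insert, Finset.mem_singleton] at hi
    rcases hi with h | h <;> simp [h, Finset.mem_Icc] <;> omega
  rw [Finset.sum_apply]
  rw [← Finset.sum_subset hsub (by
    intro i hi hni
    simp only [Finset.mem_insert, Finset.mem_singleton, not_or] at hni
    simp [eVec, hni.1, hni.2])]
  rw [Finset.sum_pair hne]
  simp [eVec, hne, (show n ≠ (j:ℕ) by omega)]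
  ring

lemma chain_rep (n : ℕ) (k : ℕ) : ∀ (t : ℕ → ℝ),
    ((Finset.Icc 1 (n+1)).filter (fun i => 0 < t i)).card = k →
    (∀ i ∈ Finset.Icc 1 (n+1), 0 ≤ t i) →
    ∃ T : Finset (Finset ℕ), ∃ a : Finset ℕ → ℝ,
      (∀ C ∈ T, C.Nonempty ∧ C ⊆ (Finset.Icc 1 (n+1)).filter (fun i => 0 < t i)) ∧
      (∀ C ∈ T, ∀ C' ∈ T, C ⊆ C' ∨ C' ⊆ C) ∧
      (∀ C, 0 ≤ a C) ∧
      (∑ i ∈ Finset.Icc 1 (n+1), t i • eVec n i) = ∑ C ∈ T, a C • eSet n C := by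
  induction k using Nat.strong_induction_on with
  | _ k ih =>
    intro t hk ht
    set S := Finset.Icc 1 (n+1) with hS
    set P := S.filter (fun i => 0 < t i) with hP
    by_cases hPe : P = ∅
    · refine ⟨∅, fun _ => 0, by simp, by simp, by simp, ?_⟩
      have : ∀ i ∈ S, t i • eVec n i = 0 := by
        intro i hi
        have h1 : ¬ 0 < t i := by
          intro h
          exact (Finset.eq_empty_iff_forall_notMem.mp hPe i) (Finset.mem_filter.mpr ⟨hi, h⟩)
        have : t i = 0 := le_antisymm (not_lt.mp h1) (ht i hi)
        simp [this]
      rw [Finset.sum_congr rfl this]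
      simp
    · have hPne : P.Nonempty := Finset.nonempty_iff_ne_empty.mpr hPe
      set m := P.inf' hPne t with hm
      obtain ⟨i0, hi0P, hi0⟩ := Finset.exists_mem_eq_inf' hPne t
      have hmpos : 0 < m := by
        rw [hm, hi0]
        exact (Finset.mem_filter.mp hi0P).2
      have hmle : ∀ i ∈ P, m ≤ t i := fun i hi => Finset.inf'_le t hi
      set t' : ℕ → ℝ := fun i => if i ∈ P then t i - m else 0 with ht'
      have ht'nn : ∀ i ∈ S, 0 ≤ t' i := by
        intro i hi
        simp only [ht']
        split
        · next h => linarith [hmle i h]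
        · exact le_refl 0
      set P' := S.filter (fun i => 0 < t' i) with hP'
      have hP'sub : P' ⊆ P := by
        intro i hi
        obtain ⟨hiS, hipos⟩ := Finset.mem_filter.mp hi
        by_contra hiP
        simp [ht', hiP] at hipos
      have hi0P' : i0 ∉ P' := by
        intro h
        have := (Finset.mem_filter.mp h).2
        simp only [ht', if_pos hi0P] at this
        have hmt : m = t i0 := hm.trans hi0
        linarith
      have hcard : P'.card < k := by
        rw [← hk]
        exact Finset.card_lt_card (Finset.ssubset_iff_of_subset hP'sub |>.mpr ⟨i0, hi0P, hi0P'⟩)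
      obtain ⟨T', a', hT'mem, hT'chain, ha'nn, hsum'⟩ := ih P'.card hcard t' rfl ht'nn
      have hT'subP : ∀ C ∈ T', C ⊆ P := fun C hC => (hT'mem C hC).2.trans hP'sub
      have hPnotT' : P ∉ T' := by
        intro h
        exact hi0P' ((hT'mem P h).2 hi0P)
      -- sum identity
      have key : (∑ i ∈ S, t i • eVec n i) = m • eSet n P + ∑ i ∈ S, t' i • eVec n i := by
        have e1 : (∑ i ∈ S, t i • eVec n i) = ∑ i ∈ P, t i • eVec n i := by
          refine (Finset.sum_subset (Finset.filter_subset _ _) ?_).symm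
          intro i hi hni
          have : t i = 0 := le_antisymm (not_lt.mp (fun h => hni (Finset.mem_filter.mpr ⟨hi, h⟩))) (ht i hi)
          simp [this]
        have e2 : (∑ i ∈ S, t' i • eVec n i) = ∑ i ∈ P, t' i • eVec n i := by
          refine (Finset.sum_subset (Finset.filter_subset _ _) ?_).symm
          intro i hi hni
          simp [ht', show i ∉ P from hni]
        rw [e1, e2, eSet, Finset.smul_sum, ← Finset.sum_add_distrib]
        refine Finset.sum_congr rfl ?_
        intro i hi
        simp only [ht', if_pos hi]
        rw [← add_smul]
        ring_nf
      refine ⟨insert P T', fun C => if C = P then m else a' C, ?_, ?_, ?_, ?_⟩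
      · intro C hC
        rcases Finset.mem_insert.mp hC with rfl | hC
        · exact ⟨⟨i0, hi0P⟩, subset_refl _⟩
        · exact ⟨(hT'mem C hC).1, hT'subP C hC⟩
      · intro C hC C' hC'
        rcases Finset.mem_insert.mp hC with rfl | hC <;>
          rcases Finset.mem_insert.mp hC' with rfl | hC'
        · left; rfl
        · right; exact hT'subP _ hC'
        · left; exact hT'subP _ hC
        · exact hT'chain C hC C' hC'
      · intro C
        dsimp only
        split
        · exact le_of_lt hmpos
        · exact ha'nn C
      · rw [key, Finset.sum_insert hPnotT', hsum']
        dsimp only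
        rw [if_pos rfl]
        congr 1
        refine Finset.sum_congr rfl ?_
        intro C hC
        rw [if_neg]
        intro h
        exact hPnotT' (h ▸ hC)

/-- The `B`-components of `C`: maximal elements of `B|_C`. -/
def comps (B : Finset (Finset ℕ)) (C : Finset ℕ) : Finset (Finset ℕ) :=
  Bmax (restrict B C)

lemma mem_comps {B : Finset (Finset ℕ)} {C J : Finset ℕ} :
    J ∈ comps B C ↔ (J ∈ B ∧ J ⊆ C) ∧ ∀ J' ∈ B, J' ⊆ C → J ⊆ J' → J = J' := by
  rw [comps, Bmax, restrict]
  simp only [Finset.mem_filter]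
  constructor
  · rintro ⟨⟨h1, h2⟩, h3⟩
    exact ⟨⟨h1, h2⟩, fun J' hJ' hJ'C hsub => h3 J' ⟨hJ', hJ'C⟩ hsub⟩
  · rintro ⟨⟨h1, h2⟩, h3⟩
    exact ⟨⟨h1, h2⟩, fun J' hJ' hsub => h3 J' hJ'.1 hJ'.2 hsub⟩

section Comps
variable {S : Finset ℕ} {B : Finset (Finset ℕ)} (hB : IsBuilding S B)
include hB

/-- Every element of `B|_C` with `J ⊆ C` is contained in a component. -/
lemma exists_comp_of_mem {C J : Finset ℕ} (hJ : J ∈ B) (hJC : J ⊆ C) :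
    ∃ J' ∈ comps B C, J ⊆ J' := by
  classical
  set s := (restrict B C).filter (fun I => J ⊆ I) with hs
  have hsne : s.Nonempty := ⟨J, by simp [hs, restrict, hJ, hJC]⟩
  obtain ⟨M, hMs, hMmax⟩ := Finset.exists_max_image s Finset.card hsne
  simp only [hs, Finset.mem_filter, restrict] at hMs
  obtain ⟨⟨hMB, hMC⟩, hJM⟩ := hMs
  refine ⟨M, mem_comps.mpr ⟨⟨hMB, hMC⟩, ?_⟩, hJM⟩
  intro J' hJ'B hJ'C hsub
  have hJ's : J' ∈ s := by
    simp only [hs, Finset.mem_filter, restrict]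
    exact ⟨⟨hJ'B, hJ'C⟩, hJM.trans hsub⟩
  exact Finset.eq_of_subset_of_card_le hsub (hMmax J' hJ's)

/-- Absorption: an element of `B` inside `C` meeting a component is contained in it. -/
lemma comp_absorb {C J J' : Finset ℕ} (hJ : J ∈ B) (hJC : J ⊆ C)
    (hJ' : J' ∈ comps B C) (hmeet : (J ∩ J').Nonempty) : J ⊆ J' := by
  obtain ⟨⟨hJ'B, hJ'C⟩, hmax⟩ := mem_comps.mp hJ'
  have hunion : J ∪ J' ∈ B := hB.2.1 J hJ J' hJ'B hmeet
  have : J' = J ∪ J' := hmax (J ∪ J') hunion (Finset.union_subset hJC hJ'C)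
      Finset.subset_union_right
  rw [this]
  exact Finset.subset_union_left

lemma comps_disjoint {C J J' : Finset ℕ} (hJ : J ∈ comps B C) (hJ' : J' ∈ comps B C)
    (hne : J ≠ J') : J ∩ J' = ∅ := by
  by_contra h
  have hmeet : (J ∩ J').Nonempty := Finset.nonempty_iff_ne_empty.mpr h
  obtain ⟨⟨hJB, hJC⟩, _⟩ := mem_comps.mp hJ
  obtain ⟨⟨hJ'B, hJ'C⟩, _⟩ := mem_comps.mp hJ'
  have h1 := comp_absorb hB hJB hJC hJ' hmeet
  have h2 := comp_absorb hB hJ'B hJ'C hJ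
      (by rwa [Finset.inter_comm] at hmeet)
  exact hne (Finset.Subset.antisymm h1 h2)

lemma comps_cover {C : Finset ℕ} (hCS : C ⊆ S) : (comps B C).biUnion id = C := by
  apply Finset.Subset.antisymm
  · intro i hi
    obtain ⟨J, hJ, hiJ⟩ := Finset.mem_biUnion.mp hi
    exact (mem_comps.mp hJ).1.2 hiJ
  · intro i hi
    have hsing : ({i} : Finset ℕ) ∈ B := hB.2.2 i (hCS hi)
    obtain ⟨J, hJ, hsub⟩ := exists_comp_of_mem hB hsing (Finset.singleton_subset_iff.mpr hi)
    exact Finset.mem_biUnion.mpr ⟨J, hJ, hsub (Finset.mem_singleton_self i)⟩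

lemma eSet_comps {n : ℕ} {C : Finset ℕ} (hCS : C ⊆ S) :
    eSet n C = ∑ J ∈ comps B C, eSet n J := by
  have hdisj : (↑(comps B C) : Set (Finset ℕ)).PairwiseDisjoint id := by
    intro J hJ J' hJ' hne
    simp only [Function.onFun, id]
    rw [Finset.disjoint_iff_inter_eq_empty]
    exact comps_disjoint hB hJ hJ' hne
  rw [eSet]
  conv_lhs => rw [← comps_cover hB hCS]
  rw [Finset.sum_biUnion hdisj]
  rfl

end Comps

/-- For a connected building set `B` on `S = {1, …, n+1}`, the cones
`ℝ_{≥0}N = ∑_{I ∈ N} ℝ_{≥0} e_I`, over all nested sets `N` of `B`, cover `ℝ^n`. -/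
theorem stmt_16 (n : ℕ) (B : Finset (Finset ℕ))
    (hB : IsBuilding (Finset.Icc 1 (n + 1)) B)
    (hconn : Bmax B = {Finset.Icc 1 (n + 1)})
    (x : Fin n → ℝ) :
    ∃ N : Finset (Finset ℕ), IsNested B N ∧
      ∃ c : Finset ℕ → ℝ, (∀ J, 0 ≤ c J) ∧ x = ∑ J ∈ N, c J • eSet n J := by

  classical
  set S := Finset.Icc 1 (n+1) with hSdef
  have hSne : S.Nonempty := ⟨n+1, by simp [hSdef]⟩
  set y : ℕ → ℝ := fun i => if h : i - 1 < n then x ⟨i-1, h⟩ else 0 with hy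
  set m := S.inf' hSne y with hm
  set t : ℕ → ℝ := fun i => y i - m with htdef
  have htnn : ∀ i ∈ S, 0 ≤ t i := by
    intro i hi
    simp only [htdef, sub_nonneg]
    exact Finset.inf'_le y hi
  have hyn1 : y (n+1) = 0 := by simp [hy]
  have hx : x = ∑ i ∈ S, t i • eVec n i := by
    funext j
    rw [eVec_sum_apply n t j]
    have h1 : t ((j:ℕ)+1) = y ((j:ℕ)+1) - m := rfl
    have h2 : t (n+1) = y (n+1) - m := rfl
    have h3 : y ((j:ℕ)+1) = x j := by
      have hj : (j:ℕ)+1-1 < n := by omega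
      simp only [hy]
      rw [dif_pos hj]
      exact congrArg x (Fin.ext (show ((j:ℕ)+1-1 : ℕ) = (j:ℕ) by omega))
    rw [h1, h2, h3, hyn1]
    ring
  obtain ⟨i0, hi0S, hi0⟩ := Finset.exists_mem_eq_inf' hSne y
  set P := S.filter (fun i => 0 < t i) with hPdef
  have hi0P : i0 ∉ P := by
    intro h
    have h2 : 0 < t i0 := (Finset.mem_filter.mp h).2
    have h3 : t i0 = 0 := by simp [htdef, hm, hi0]
    rw [h3] at h2
    exact lt_irrefl 0 h2
  have hPS : P ⊆ S := Finset.filter_subset _ _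
  obtain ⟨T, a, hTmem, hTchain, hann, hsum⟩ := chain_rep n P.card t rfl htnn
  rw [← hx] at hsum
  -- define N and c
  set N := T.biUnion (fun C => comps B C) with hN
  set c : Finset ℕ → ℝ := fun J => ∑ C ∈ T.filter (fun C => J ∈ comps B C), a C with hc
  have hcompmem : ∀ J ∈ N, ∃ C ∈ T, J ∈ comps B C := by
    intro J hJ
    exact Finset.mem_biUnion.mp hJ
  have hJsubP : ∀ {C J : Finset ℕ}, C ∈ T → J ∈ comps B C → J ⊆ P := by
    intro C J hC hJ
    exact (mem_comps.mp hJ).1.2.trans (hTmem C hC).2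
  refine ⟨N, ⟨?_, ?_, ?_⟩, c, ?_, ?_⟩
  · -- N ⊆ B \ Bmax B
    intro J hJ
    obtain ⟨C, hC, hJC⟩ := hcompmem J hJ
    have hJB : J ∈ B := (mem_comps.mp hJC).1.1
    refine Finset.mem_sdiff.mpr ⟨hJB, ?_⟩
    intro hJmax
    rw [hconn, Finset.mem_singleton] at hJmax
    have : i0 ∈ J := by rw [hJmax]; exact hi0S
    exact hi0P (hJsubP hC hJC this)
  · -- pairwise nested or disjoint
    intro I hI J hJ
    obtain ⟨C, hC, hIC⟩ := hcompmem I hI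
    obtain ⟨C', hC', hJC'⟩ := hcompmem J hJ
    by_cases hmeet : I ∩ J = ∅
    · exact Or.inr (Or.inr hmeet)
    · have hmeet' : (I ∩ J).Nonempty := Finset.nonempty_iff_ne_empty.mpr hmeet
      rcases hTchain C hC C' hC' with hsub | hsub
      · left
        exact comp_absorb hB (mem_comps.mp hIC).1.1
          ((mem_comps.mp hIC).1.2.trans hsub) hJC' hmeet'
      · right; left
        exact comp_absorb hB (mem_comps.mp hJC').1.1
          ((mem_comps.mp hJC').1.2.trans hsub) hIC
          (by rwa [Finset.inter_comm] at hmeet')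
  · -- no disjoint union in B
    intro F hFN hFcard hFdisj hUB
    set U := F.sup id with hU
    have hFne : F.Nonempty := Finset.card_pos.mp (by omega)
    set Tf := T.filter (fun C => ∃ J ∈ F, J ∈ comps B C) with hTf
    have hTfne : Tf.Nonempty := by
      obtain ⟨J, hJ⟩ := hFne
      obtain ⟨C, hC, hJC⟩ := hcompmem J (hFN hJ)
      exact ⟨C, Finset.mem_filter.mpr ⟨hC, J, hJ, hJC⟩⟩
    obtain ⟨Cm, hCm, hCmmax⟩ := Finset.exists_max_image Tf Finset.card hTfne
    obtain ⟨hCmT, I0, hI0F, hI0C⟩ := Finset.mem_filter.mp hCm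
    have hTfsub : ∀ C ∈ Tf, C ⊆ Cm := by
      intro C hC
      rcases hTchain C (Finset.mem_filter.mp hC).1 Cm hCmT with h | h
      · exact h
      · exact le_of_eq (Finset.eq_of_subset_of_card_le h (hCmmax C hC)).symm
    have hFsubCm : ∀ J ∈ F, J ⊆ Cm := by
      intro J hJ
      obtain ⟨C, hC, hJC⟩ := hcompmem J (hFN hJ)
      exact (mem_comps.mp hJC).1.2.trans
        (hTfsub C (Finset.mem_filter.mpr ⟨hC, J, hJ, hJC⟩))
    have hUCm : U ⊆ Cm := Finset.sup_le (fun J hJ => hFsubCm J hJ)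
    have hI0U : I0 ⊆ U := Finset.le_sup (f := id) hI0F
    have hI0eqU : I0 = U := (mem_comps.mp hI0C).2 U hUB hUCm hI0U
    obtain ⟨J1, hJ1, J2, hJ2, hne⟩ := Finset.one_lt_card.mp (by omega : 1 < F.card)
    have : ∃ J ∈ F, J ≠ I0 := by
      by_cases h : J1 = I0
      · exact ⟨J2, hJ2, fun hh => hne (h ▸ hh ▸ rfl)⟩
      · exact ⟨J1, hJ1, h⟩
    obtain ⟨J, hJF, hJne⟩ := this
    have hJU : J ⊆ U := Finset.le_sup (f := id) hJF
    have hJI0 : J ∩ I0 = ∅ := hFdisj J hJF I0 hI0F hJne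
    have hJB : J ∈ B := by
      obtain ⟨C, hC, hJC⟩ := hcompmem J (hFN hJF)
      exact (mem_comps.mp hJC).1.1
    have hJnonempty : J.Nonempty := (hB.1 J hJB).2
    obtain ⟨i, hi⟩ := hJnonempty
    have : i ∈ J ∩ I0 := Finset.mem_inter.mpr ⟨hi, hI0eqU ▸ hJU hi⟩
    rw [hJI0] at this
    exact absurd this (Finset.notMem_empty i)
  · -- c nonneg
    intro J
    exact Finset.sum_nonneg (fun C _ => hann C)
  · -- sum identity
    have hfilter : ∀ C ∈ T, N.filter (fun J => J ∈ comps B C) = comps B C := by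
      intro C hC
      ext J
      simp only [Finset.mem_filter]
      constructor
      · exact And.right
      · intro h
        exact ⟨Finset.mem_biUnion.mpr ⟨C, hC, h⟩, h⟩
    calc x = ∑ C ∈ T, a C • eSet n C := hsum
      _ = ∑ C ∈ T, ∑ J ∈ comps B C, a C • eSet n J := by
          refine Finset.sum_congr rfl ?_
          intro C hC
          rw [eSet_comps hB ((hTmem C hC).2.trans hPS), Finset.smul_sum]
      _ = ∑ C ∈ T, ∑ J ∈ N, if J ∈ comps B C then a C • eSet n J else 0 := by
          refine Finset.sum_congr rfl ?_
          intro C hC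
          rw [← Finset.sum_filter, hfilter C hC]
      _ = ∑ J ∈ N, ∑ C ∈ T, if J ∈ comps B C then a C • eSet n J else 0 :=
          Finset.sum_comm
      _ = ∑ J ∈ N, c J • eSet n J := by
          refine Finset.sum_congr rfl ?_
          intro J hJ
          rw [hc, Finset.sum_smul, Finset.sum_filter]
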